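/- Let K be a graph of bounded valence, Δ the combinatorial Laplacian and Δ_σ the discrete magnetic Laplacian for a multiplier σ. For every t > 0 and every f ∈ C⁰₍₂₎(K), the heat semigroup domination |e^{-tΔ_σ} f| ≤ e^{-tΔ} |f| holds pointwise on vertices. In particular, for every vertex v and t > 0, the diagonal heat kernels satisfy p_t^σ(v,v) ≤ p_t(v,v), where p_t(v,w) = (e^{-tΔ}δ_v, δ_w) and p_t^σ(v,w) = (e^{-tΔ_σ}δ_v, δ_w). -/

import Mathlib

open ComplexConjugate

/-- The combinatorial Laplacian on complex-valued functions. -/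
noncomputable def combLapC {V : Type*} (G : SimpleGraph V) [G.LocallyFinite]
    (f : V → ℂ) (v : V) : ℂ :=
  ∑ w ∈ G.neighborFinset v, (f v - f w)

/-- The discrete magnetic Laplacian associated to a multiplier `σ`. -/
noncomputable def magLap {V : Type*} (G : SimpleGraph V) [G.LocallyFinite]
    (σ : V → V → ℂ) (f : V → ℂ) (v : V) : ℂ :=
  ∑ w ∈ G.neighborFinset v, (f v - σ w v * f w)

noncomputable def evalCLM {V : Type*} (v : V) : lp (fun _ : V => ℂ) 2 →L[ℂ] ℂ :=
  LinearMap.mkContinuous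
    { toFun := fun f => f v
      map_add' := fun f g => by simp [lp.coeFn_add]
      map_smul' := fun c f => by simp [lp.coeFn_smul] }
    1 (fun f => by
      show ‖f v‖ ≤ 1 * ‖f‖
      simpa using lp.norm_apply_le_norm (by norm_num : (2 : ENNReal) ≠ 0) f v)

@[simp] lemma evalCLM_apply {V : Type*} (v : V) (f : lp (fun _ : V => ℂ) 2) :
    evalCLM v f = f v := rfl

section Aux

variable {V : Type*} [DecidableEq V] (G : SimpleGraph V) [G.LocallyFinite]

local notation "H" => lp (fun _ : V => ℂ) 2

/-- Apply formula for `B = M•1 - A`. -/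
lemma B_apply (M : ℕ) (A : H →L[ℂ] H)
    (hA : ∀ (f : H) (v : V), A f v = combLapC G (⇑f) v) (h : H) (v : V) :
    (((M : ℂ) • (1 : H →L[ℂ] H) - A) h) v
      = ((M : ℂ) - (G.degree v : ℂ)) * h v + ∑ w ∈ G.neighborFinset v, h w := by
  have : (((M : ℂ) • (1 : H →L[ℂ] H) - A) h) = (M : ℂ) • h - A h := by
    simp [sub_smul, ContinuousLinearMap.sub_apply]
  rw [this]
  have h2 : ((M : ℂ) • h - A h) v = (M : ℂ) * h v - A h v := by
    rw [lp.coeFn_sub]; simp [lp.coeFn_smul, smul_eq_mul]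
  rw [h2, hA, combLapC, Finset.sum_sub_distrib, Finset.sum_const,
    SimpleGraph.card_neighborFinset_eq_degree]
  push_cast
  ring

lemma Bσ_apply (M : ℕ) (σ : V → V → ℂ) (Aσ : H →L[ℂ] H)
    (hAσ : ∀ (f : H) (v : V), Aσ f v = magLap G σ (⇑f) v) (h : H) (v : V) :
    (((M : ℂ) • (1 : H →L[ℂ] H) - Aσ) h) v
      = ((M : ℂ) - (G.degree v : ℂ)) * h v + ∑ w ∈ G.neighborFinset v, σ w v * h w := by
  have : (((M : ℂ) • (1 : H →L[ℂ] H) - Aσ) h) = (M : ℂ) • h - Aσ h := by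
    simp [sub_smul, ContinuousLinearMap.sub_apply]
  rw [this]
  have h2 : ((M : ℂ) • h - Aσ h) v = (M : ℂ) * h v - Aσ h v := by
    rw [lp.coeFn_sub]; simp [lp.coeFn_smul, smul_eq_mul]
  rw [h2, hAσ, magLap, Finset.sum_sub_distrib, Finset.sum_const,
    SimpleGraph.card_neighborFinset_eq_degree]
  push_cast
  ring

/-- one-step domination -/
lemma step_dom (M : ℕ) (hM : ∀ v, G.degree v ≤ M)
    (σ : V → V → ℂ) (hσ1 : ∀ u v, G.Adj u v → ‖σ u v‖ = 1)
    (A Aσ : H →L[ℂ] H)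
    (hA : ∀ (f : H) (v : V), A f v = combLapC G (⇑f) v)
    (hAσ : ∀ (f : H) (v : V), Aσ f v = magLap G σ (⇑f) v)
    (f g : H) (hfg : ∀ v, ‖f v‖ ≤ (g v).re) (hg : ∀ v, (g v).im = 0) :
    (∀ v, ‖(((M : ℂ) • (1 : H →L[ℂ] H) - Aσ) f) v‖
        ≤ ((((M : ℂ) • (1 : H →L[ℂ] H) - A) g) v).re)
    ∧ (∀ v, ((((M : ℂ) • (1 : H →L[ℂ] H) - A) g) v).im = 0) := by
  constructor
  · intro v
    rw [B_apply G M A hA, Bσ_apply G M σ Aσ hAσ]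
    have hdeg : (0 : ℝ) ≤ (M : ℝ) - (G.degree v : ℝ) := by
      have := hM v; simp; exact_mod_cast this
    calc ‖((M : ℂ) - (G.degree v : ℂ)) * f v + ∑ w ∈ G.neighborFinset v, σ w v * f w‖
        ≤ ‖((M : ℂ) - (G.degree v : ℂ)) * f v‖ + ‖∑ w ∈ G.neighborFinset v, σ w v * f w‖ :=
          norm_add_le _ _
      _ ≤ ((M : ℝ) - (G.degree v : ℝ)) * ‖f v‖
            + ∑ w ∈ G.neighborFinset v, ‖σ w v * f w‖ := by
          gcongr
          · rw [norm_mul]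
            gcongr
            have hc : ((M : ℂ) - (G.degree v : ℂ)) = (((M : ℝ) - (G.degree v : ℝ) : ℝ) : ℂ) := by
              push_cast; ring
            rw [hc, Complex.norm_real]
            exact le_of_eq (abs_of_nonneg hdeg)
          · exact norm_sum_le _ _
      _ ≤ ((M : ℝ) - (G.degree v : ℝ)) * (g v).re
            + ∑ w ∈ G.neighborFinset v, (g w).re := by
          gcongr with w hw
          · exact hfg v
          · rw [norm_mul, hσ1 w v (G.adj_symm ((SimpleGraph.mem_neighborFinset G v w).mp hw)), one_mul]
            exact hfg w
      _ = (((M : ℂ) - (G.degree v : ℂ)) * g v + ∑ w ∈ G.neighborFinset v, g w).re := by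
          rw [Complex.add_re, Complex.mul_re]
          have him : ((M : ℂ) - (G.degree v : ℂ)).im = 0 := by simp
          have hre : ((M : ℂ) - (G.degree v : ℂ)).re = (M : ℝ) - (G.degree v : ℝ) := by simp
          rw [him, hre, hg v, Complex.re_sum]
          ring
  · intro v
    rw [B_apply G M A hA]
    rw [Complex.add_im, Complex.mul_im]
    have him : ((M : ℂ) - (G.degree v : ℂ)).im = 0 := by simp
    rw [him, hg v, Complex.im_sum]
    simp [hg]

lemma pow_dom (M : ℕ) (hM : ∀ v, G.degree v ≤ M)
    (σ : V → V → ℂ) (hσ1 : ∀ u v, G.Adj u v → ‖σ u v‖ = 1)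
    (A Aσ : H →L[ℂ] H)
    (hA : ∀ (f : H) (v : V), A f v = combLapC G (⇑f) v)
    (hAσ : ∀ (f : H) (v : V), Aσ f v = magLap G σ (⇑f) v)
    (f g : H) (hfg : ∀ v, ‖f v‖ ≤ (g v).re) (hg : ∀ v, (g v).im = 0) (n : ℕ) :
    (∀ v, ‖((((M : ℂ) • (1 : H →L[ℂ] H) - Aσ) ^ n) f v)‖
        ≤ (((((M : ℂ) • (1 : H →L[ℂ] H) - A) ^ n) g v)).re)
    ∧ (∀ v, (((((M : ℂ) • (1 : H →L[ℂ] H) - A) ^ n) g v)).im = 0) := by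
  induction n with
  | zero => simpa using ⟨hfg, hg⟩
  | succ n ih =>
    have hre := ih.1
    have him := ih.2
    have key := step_dom G M hM σ hσ1 A Aσ hA hAσ
      ((((M : ℂ) • (1 : H →L[ℂ] H) - Aσ) ^ n) f)
      ((((M : ℂ) • (1 : H →L[ℂ] H) - A) ^ n) g) hre him
    constructor
    · intro v
      have h1 : (((M : ℂ) • (1 : H →L[ℂ] H) - Aσ) ^ (n + 1)) f
          = ((M : ℂ) • (1 : H →L[ℂ] H) - Aσ) ((((M : ℂ) • (1 : H →L[ℂ] H) - Aσ) ^ n) f) := by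
        rw [pow_succ']; rfl
      have h2 : (((M : ℂ) • (1 : H →L[ℂ] H) - A) ^ (n + 1)) g
          = ((M : ℂ) • (1 : H →L[ℂ] H) - A) ((((M : ℂ) • (1 : H →L[ℂ] H) - A) ^ n) g) := by
        rw [pow_succ']; rfl
      rw [h1, h2]
      exact key.1 v
    · intro v
      have h2 : (((M : ℂ) • (1 : H →L[ℂ] H) - A) ^ (n + 1)) g
          = ((M : ℂ) • (1 : H →L[ℂ] H) - A) ((((M : ℂ) • (1 : H →L[ℂ] H) - A) ^ n) g) := by
        rw [pow_succ']; rfl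
      rw [h2]
      exact key.2 v

end Aux

section Exp

variable {V : Type*}

local notation "H" => lp (fun _ : V => ℂ) 2

lemma exp_split (c : ℂ) (S : H →L[ℂ] H) :
    NormedSpace.exp (c • (1 : H →L[ℂ] H) + S) = Complex.exp c • NormedSpace.exp S := by
  rw [NormedSpace.exp_add_of_commute_of_mem_ball (𝕂 := ℂ) ((Commute.one_left S).smul_left c)
    ((NormedSpace.expSeries_radius_eq_top ℂ (H →L[ℂ] H)).symm ▸ edist_lt_top _ _)
    ((NormedSpace.expSeries_radius_eq_top ℂ (H →L[ℂ] H)).symm ▸ edist_lt_top _ _)]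
  have h1 : NormedSpace.exp (c • (1 : H →L[ℂ] H)) = Complex.exp c • 1 := by
    rw [← Algebra.algebraMap_eq_smul_one, ← NormedSpace.algebraMap_exp_comm,
      Complex.exp_eq_exp_ℂ, Algebra.algebraMap_eq_smul_one]
  rw [h1, smul_mul_assoc, one_mul]

lemma exp_apply_hasSum (S : H →L[ℂ] H) (f : H) (v : V) :
    HasSum (fun n : ℕ => ((n.factorial : ℂ))⁻¹ * ((S ^ n) f v))
      (NormedSpace.exp S f v) := by
  have hs : Summable fun n : ℕ => ((n.factorial : ℂ))⁻¹ • S ^ n :=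
    NormedSpace.expSeries_summable' (𝕂 := ℂ) S
  have hexp : NormedSpace.exp S = ∑' n : ℕ, ((n.factorial : ℂ))⁻¹ • S ^ n :=
    congrFun (NormedSpace.exp_eq_tsum ℂ) S
  have φ : (H →L[ℂ] H) →L[ℂ] ℂ :=
    (evalCLM v).comp (ContinuousLinearMap.apply ℂ (lp (fun _ : V => ℂ) 2) f)
  have hmap := hs.hasSum.mapL
    ((evalCLM v).comp (ContinuousLinearMap.apply ℂ (lp (fun _ : V => ℂ) 2) f))
  rw [← hexp] at hmap
  convert hmap using 2 <;> simp [lp.coeFn_smul]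


end Exp

set_option maxHeartbeats 2000000 in
theorem heat_semigroup_domination {V : Type*} [DecidableEq V] (G : SimpleGraph V)
    [G.LocallyFinite] (M : ℕ) (hM : ∀ v, G.degree v ≤ M)
    (σ : V → V → ℂ) (hσ1 : ∀ u v, G.Adj u v → ‖σ u v‖ = 1)
    (hσ2 : ∀ u v, G.Adj u v → σ u v = conj (σ v u))
    (A Aσ : lp (fun _ : V => ℂ) 2 →L[ℂ] lp (fun _ : V => ℂ) 2)
    (hA : ∀ (f : lp (fun _ : V => ℂ) 2) (v : V), A f v = combLapC G (⇑f) v)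
    (hAσ : ∀ (f : lp (fun _ : V => ℂ) 2) (v : V), Aσ f v = magLap G σ (⇑f) v)
    (t : ℝ) (ht : 0 < t) :
    (∀ f g : lp (fun _ : V => ℂ) 2, (∀ v, g v = (‖f v‖ : ℂ)) →
      ∀ v, ‖NormedSpace.exp (-(t : ℂ) • Aσ) f v‖ ≤
        (NormedSpace.exp (-(t : ℂ) • A) g v).re) ∧
    (∀ v : V, (NormedSpace.exp (-(t : ℂ) • Aσ) (lp.single 2 v 1) v).re ≤
      (NormedSpace.exp (-(t : ℂ) • A) (lp.single 2 v 1) v).re) := by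
  have main : ∀ f g : lp (fun _ : V => ℂ) 2, (∀ v, g v = (‖f v‖ : ℂ)) →
      ∀ v, ‖NormedSpace.exp (-(t : ℂ) • Aσ) f v‖ ≤
        (NormedSpace.exp (-(t : ℂ) • A) g v).re := by
    intro f g hfg v
    set B := (M : ℂ) • (1 : lp (fun _ : V => ℂ) 2 →L[ℂ] lp (fun _ : V => ℂ) 2) - A with hBdef
    set Bσ := (M : ℂ) • (1 : lp (fun _ : V => ℂ) 2 →L[ℂ] lp (fun _ : V => ℂ) 2) - Aσ
      with hBσdef
    have hdecσ : -(t : ℂ) • Aσ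
        = (-(t * M) : ℂ) • (1 : lp (fun _ : V => ℂ) 2 →L[ℂ] lp (fun _ : V => ℂ) 2)
          + (t : ℂ) • Bσ := by
      rw [hBσdef]; module
    have hdec : -(t : ℂ) • A
        = (-(t * M) : ℂ) • (1 : lp (fun _ : V => ℂ) 2 →L[ℂ] lp (fun _ : V => ℂ) 2)
          + (t : ℂ) • B := by
      rw [hBdef]; module
    have hcast : (-(t * M) : ℂ) = ((-(t * M) : ℝ) : ℂ) := by push_cast; ring
    have hvσ : NormedSpace.exp (-(t : ℂ) • Aσ) f v
        = ((Real.exp (-(t * M)) : ℝ) : ℂ) * (NormedSpace.exp ((t : ℂ) • Bσ) f v) := by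
      rw [hdecσ, exp_split, hcast, ← Complex.ofReal_exp, ContinuousLinearMap.smul_apply,
        lp.coeFn_smul]
      simp [smul_eq_mul]
    have hv : NormedSpace.exp (-(t : ℂ) • A) g v
        = ((Real.exp (-(t * M)) : ℝ) : ℂ) * (NormedSpace.exp ((t : ℂ) • B) g v) := by
      rw [hdec, exp_split, hcast, ← Complex.ofReal_exp, ContinuousLinearMap.smul_apply,
        lp.coeFn_smul]
      simp [smul_eq_mul]
    rw [hvσ, hv, norm_mul, Complex.norm_real, Real.norm_eq_abs,
      abs_of_nonneg (Real.exp_nonneg _), Complex.re_ofReal_mul]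
    have hexp_nonneg : (0 : ℝ) ≤ Real.exp (-(t * M)) := Real.exp_nonneg _
    apply mul_le_mul_of_nonneg_left _ hexp_nonneg
    -- core inequality
    have hfg' : ∀ w, ‖f w‖ ≤ (g w).re := fun w => by rw [hfg w]; simp
    have hgim : ∀ w, (g w).im = 0 := fun w => by rw [hfg w]; simp
    have hpow := pow_dom G M hM σ hσ1 A Aσ hA hAσ f g hfg' hgim
    have hSσ := exp_apply_hasSum ((t : ℂ) • Bσ) f v
    have hS := exp_apply_hasSum ((t : ℂ) • B) g v
    have hSre := hS.mapL Complex.reCLM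
    have hterm : ∀ n : ℕ, ‖((n.factorial : ℂ))⁻¹ * ((((t : ℂ) • Bσ) ^ n) f v)‖
        ≤ (((n.factorial : ℂ))⁻¹ * ((((t : ℂ) • B) ^ n) g v)).re := by
      intro n
      have e1 : ((((t : ℂ) • Bσ) ^ n) f) v = (t : ℂ) ^ n * ((Bσ ^ n) f v) := by
        rw [smul_pow, ContinuousLinearMap.smul_apply, lp.coeFn_smul]; simp [smul_eq_mul]
      have e2 : ((((t : ℂ) • B) ^ n) g) v = (t : ℂ) ^ n * ((B ^ n) g v) := by
        rw [smul_pow, ContinuousLinearMap.smul_apply, lp.coeFn_smul]; simp [smul_eq_mul]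
      have hc2 : ((n.factorial : ℂ))⁻¹ * (t : ℂ) ^ n
          = ((t ^ n / n.factorial : ℝ) : ℂ) := by push_cast; ring
      have hr : (0 : ℝ) ≤ t ^ n / n.factorial := by positivity
      rw [e1, e2, ← mul_assoc, ← mul_assoc, hc2, Complex.re_ofReal_mul, norm_mul,
        Complex.norm_real, Real.norm_eq_abs, abs_of_nonneg hr]
      exact mul_le_mul_of_nonneg_left ((hpow n).1 v) hr
    have hnormsum : Summable
        (fun n : ℕ => ‖((n.factorial : ℂ))⁻¹ * ((((t : ℂ) • Bσ) ^ n) f v)‖) := by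
      apply Summable.of_nonneg_of_le (fun n => norm_nonneg _) (fun n => ?_)
        ((NormedSpace.norm_expSeries_summable' (𝕂 := ℂ) ((t : ℂ) • Bσ)).mul_right ‖f‖)
      have h1 : ((n.factorial : ℂ))⁻¹ * ((((t : ℂ) • Bσ) ^ n) f v)
          = ((((n.factorial : ℂ))⁻¹ • ((t : ℂ) • Bσ) ^ n) f) v := by
        rw [ContinuousLinearMap.smul_apply, lp.coeFn_smul]; simp [smul_eq_mul]
      rw [h1]
      calc ‖((((n.factorial : ℂ))⁻¹ • ((t : ℂ) • Bσ) ^ n) f) v‖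
          ≤ ‖(((n.factorial : ℂ))⁻¹ • ((t : ℂ) • Bσ) ^ n) f‖ :=
            lp.norm_apply_le_norm (by norm_num) _ v
        _ ≤ ‖((n.factorial : ℂ))⁻¹ • ((t : ℂ) • Bσ) ^ n‖ * ‖f‖ :=
            ContinuousLinearMap.le_opNorm _ _
    calc ‖NormedSpace.exp ((t : ℂ) • Bσ) f v‖
        = ‖∑' n : ℕ, ((n.factorial : ℂ))⁻¹ * ((((t : ℂ) • Bσ) ^ n) f v)‖ := by
          rw [hSσ.tsum_eq]
      _ ≤ ∑' n : ℕ, ‖((n.factorial : ℂ))⁻¹ * ((((t : ℂ) • Bσ) ^ n) f v)‖ :=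
          norm_tsum_le_tsum_norm hnormsum
      _ ≤ ∑' n : ℕ, (((n.factorial : ℂ))⁻¹ * ((((t : ℂ) • B) ^ n) g v)).re :=
          Summable.tsum_le_tsum hterm hnormsum hSre.summable
      _ = (NormedSpace.exp ((t : ℂ) • B) g v).re := hSre.tsum_eq
  refine ⟨main, ?_⟩
  intro v
  have h1 : ∀ w, (lp.single 2 v (1 : ℂ) : lp (fun _ : V => ℂ) 2) w
      = (‖(lp.single 2 v (1 : ℂ) : lp (fun _ : V => ℂ) 2) w‖ : ℂ) := by
    intro w
    rcases eq_or_ne w v with rfl | hw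
    · rw [lp.single_apply_self]; norm_num
    · rw [lp.single_apply_ne 2 v _ hw]; norm_num
  have key := main (lp.single 2 v 1) (lp.single 2 v 1) h1 v
  calc (NormedSpace.exp (-(t : ℂ) • Aσ) (lp.single 2 v 1) v).re
      ≤ ‖NormedSpace.exp (-(t : ℂ) • Aσ) (lp.single 2 v 1) v‖ := by
        exact Complex.re_le_norm _
    _ ≤ (NormedSpace.exp (-(t : ℂ) • A) (lp.single 2 v 1) v).re := key
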